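/- Let (A, ∘, B) be a finite-dimensional quadratic Novikov algebra. Then there exist finitely many ideals A_1,…,A_r of (A,∘) such that A = A_1 ⊕ ⋯ ⊕ A_r, where each A_i is nondegenerate (B restricted to A_i × A_i is nondegenerate), each A_i contains no nonzero proper nondegenerate ideal of A, and B(A_i, A_j) = 0 for i ≠ j. -/

import Mathlib

open Module

section Aux

variable {k A : Type*} [Field k] [AddCommGroup A] [Module k A]

/-- Pairwise-orthogonal nondegenerate submodules are independent. -/
lemma indep_of_ortho (B : LinearMap.BilinForm k A)
    (hsym : ∀ a b, B a b = B b a) {r : ℕ} (Ai : Fin r → Submodule k A)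
    (hndeg : ∀ i, ∀ x ∈ Ai i, (∀ y ∈ Ai i, B x y = 0) → x = 0)
    (horth : ∀ i j, i ≠ j → ∀ x ∈ Ai i, ∀ y ∈ Ai j, B x y = 0) :
    iSupIndep Ai := by
  rw [iSupIndep_def]
  intro i
  rw [Submodule.disjoint_def]
  intro x hxi hxs
  have hle : (⨆ j, ⨆ _ : j ≠ i, Ai j) ≤ B.orthogonal (Ai i) := by
    refine iSup_le fun j => iSup_le fun hji z hz n hn => ?_
    exact horth i j (Ne.symm hji) n hn z hz
  have hx' := hle hxs
  refine hndeg i x hxi fun y hy => ?_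
  rw [hsym]
  exact hx' y hy

lemma decomp_aux [FiniteDimensional k A]
    (mul : A →ₗ[k] A →ₗ[k] A) (B : LinearMap.BilinForm k A)
    (hsym : ∀ a b, B a b = B b a)
    (hinv : ∀ a b c, B (mul a b) c = -(B b (mul a c + mul c a))) :
    ∀ n (S : Submodule k A), finrank k S < n →
      (∀ a ∈ S, ∀ x : A, mul a x ∈ S ∧ mul x a ∈ S) →
      (∀ x ∈ S, (∀ y ∈ S, B x y = 0) → x = 0) →
      ∃ (r : ℕ) (Ai : Fin r → Submodule k A),
        (⨆ i, Ai i) = S ∧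
        (∀ i, ∀ a ∈ Ai i, ∀ x : A, mul a x ∈ Ai i ∧ mul x a ∈ Ai i) ∧
        (∀ i, ∀ x ∈ Ai i, (∀ y ∈ Ai i, B x y = 0) → x = 0) ∧
        (∀ i, ∀ I : Submodule k A,
          (∀ a ∈ I, ∀ x : A, mul a x ∈ I ∧ mul x a ∈ I) →
          (∀ x ∈ I, (∀ y ∈ I, B x y = 0) → x = 0) →
          I ≤ Ai i → I = ⊥ ∨ I = Ai i) ∧
        (∀ i j, i ≠ j → ∀ x ∈ Ai i, ∀ y ∈ Ai j, B x y = 0) := by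
  have hrefl : B.IsRefl := fun x y h => by rw [hsym]; exact h
  intro n
  induction n using Nat.strong_induction_on with
  | _ n IH =>
  intro S hrank hSidl hSnd
  by_cases hSbot : S = ⊥
  · refine ⟨0, fun i => i.elim0, ?_, fun i => i.elim0, fun i => i.elim0,
      fun i => i.elim0, fun i => i.elim0⟩
    simp [hSbot]
  by_cases hmin : ∀ I : Submodule k A,
      (∀ a ∈ I, ∀ x : A, mul a x ∈ I ∧ mul x a ∈ I) →
      (∀ x ∈ I, (∀ y ∈ I, B x y = 0) → x = 0) →
      I ≤ S → I = ⊥ ∨ I = S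
  · refine ⟨1, fun _ => S, by simp, fun _ => hSidl, fun _ => hSnd, fun _ => hmin,
      fun i j hij => absurd (Subsingleton.elim i j) hij⟩
  push_neg at hmin
  obtain ⟨I, hIidl, hInd, hIle, hIne⟩ := hmin
  obtain ⟨hIbot, hIS⟩ := hIne
  -- restriction of B to I is nondegenerate
  have hres : (B.restrict I).Nondegenerate := by
    constructor <;> rintro ⟨x, hx⟩ h <;> refine Subtype.ext (hInd x hx fun y hy => ?_)
    · simpa using h ⟨y, hy⟩
    · rw [hsym]; simpa using h ⟨y, hy⟩
  have hcompl : IsCompl I (B.orthogonal I) :=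
    B.isCompl_orthogonal_of_restrict_nondegenerate hrefl hres
  -- the orthogonal of I is an ideal
  have hOidl : ∀ a ∈ B.orthogonal I, ∀ x : A,
      mul x a ∈ B.orthogonal I ∧ mul a x ∈ B.orthogonal I := by
    intro a ha x
    constructor
    · intro c hc
      have h1 : B (mul x a) c = -(B a (mul x c + mul c x)) := hinv x a c
      have h2 : B a (mul x c) = 0 := by rw [hsym]; exact ha _ (hIidl c hc x).2
      have h3 : B a (mul c x) = 0 := by rw [hsym]; exact ha _ (hIidl c hc x).1
      show B c (mul x a) = 0
      rw [hsym, h1, map_add, h2, h3, add_zero, neg_zero]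
    · intro c hc
      have h1 : B (mul a x) c = -(B x (mul a c + mul c a)) := hinv a x c
      have h2 : B (mul c x) a = -(B x (mul c a + mul a c)) := hinv c x a
      have h3 : B (mul c x) a = 0 := ha _ (hIidl c hc x).1
      show B c (mul a x) = 0
      rw [hsym, h1, add_comm, ← h2, h3]
  set J : Submodule k A := B.orthogonal I ⊓ S with hJ
  have hJle : J ≤ S := inf_le_right
  have hJorth : J ≤ B.orthogonal I := inf_le_left
  have hS_eq : I ⊔ J = S := by
    have := sup_inf_assoc_of_le (B.orthogonal I) hIle
    rw [hcompl.sup_eq_top, top_inf_eq] at this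
    exact this.symm
  have hIJ : ∀ x ∈ I, x ∈ J → x = 0 := fun x hxI hxJ =>
    hInd x hxI fun y hy => by rw [hsym]; exact hxJ.1 y hy
  -- J is an ideal
  have hJidl : ∀ a ∈ J, ∀ x : A, mul a x ∈ J ∧ mul x a ∈ J := by
    intro a ha x
    exact ⟨⟨(hOidl a ha.1 x).2, (hSidl a ha.2 x).1⟩,
      ⟨(hOidl a ha.1 x).1, (hSidl a ha.2 x).2⟩⟩
  -- J is nondegenerate
  have hJnd : ∀ x ∈ J, (∀ y ∈ J, B x y = 0) → x = 0 := by
    intro x hx h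
    refine hSnd x hx.2 fun y hy => ?_
    rw [← hS_eq] at hy
    obtain ⟨i, hi, j, hj, rfl⟩ := Submodule.mem_sup.mp hy
    have : B x i = 0 := by rw [hsym]; exact hx.1 i hi
    rw [map_add, this, h j hj, add_zero]
  -- ranks drop
  have hIrank : finrank k I < finrank k S :=
    Submodule.finrank_lt_finrank_of_lt (lt_of_le_of_ne hIle hIS)
  have hJS : J ≠ S := by
    intro h
    apply hIbot
    rw [eq_bot_iff]
    intro x hx
    have := hIJ x hx (h ▸ hIle hx)
    simpa using this
  have hJrank : finrank k J < finrank k S :=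
    Submodule.finrank_lt_finrank_of_lt (lt_of_le_of_ne hJle hJS)
  obtain ⟨r1, A1, hsup1, hidl1, hnd1, hmin1, horth1⟩ :=
    IH (finrank k S) hrank I hIrank hIidl hInd
  obtain ⟨r2, A2, hsup2, hidl2, hnd2, hmin2, horth2⟩ :=
    IH (finrank k S) hrank J hJrank hJidl hJnd
  have hA1le : ∀ i, A1 i ≤ I := fun i => hsup1 ▸ le_iSup A1 i
  have hA2le : ∀ i, A2 i ≤ J := fun i => hsup2 ▸ le_iSup A2 i
  refine ⟨r1 + r2, Fin.append A1 A2, ?_, ?_, ?_, ?_, ?_⟩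
  · apply le_antisymm
    · refine iSup_le fun i => ?_
      refine Fin.addCases (fun j => ?_) (fun j => ?_) i
      · rw [Fin.append_left]; exact (hA1le j).trans (hS_eq ▸ le_sup_left : I ≤ S)
      · rw [Fin.append_right]; exact (hA2le j).trans hJle
    · rw [← hS_eq]
      refine sup_le ?_ ?_
      · rw [← hsup1]
        exact iSup_le fun j => le_iSup_of_le (Fin.castAdd r2 j) (by rw [Fin.append_left])
      · rw [← hsup2]
        exact iSup_le fun j => le_iSup_of_le (Fin.natAdd r1 j) (by rw [Fin.append_right])
  · intro i
    refine Fin.addCases (fun j => ?_) (fun j => ?_) i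
    · rw [Fin.append_left]; exact hidl1 j
    · rw [Fin.append_right]; exact hidl2 j
  · intro i
    refine Fin.addCases (fun j => ?_) (fun j => ?_) i
    · rw [Fin.append_left]; exact hnd1 j
    · rw [Fin.append_right]; exact hnd2 j
  · intro i
    refine Fin.addCases (fun j => ?_) (fun j => ?_) i
    · rw [Fin.append_left]; exact hmin1 j
    · rw [Fin.append_right]; exact hmin2 j
  · -- orthogonality
    have cross : ∀ x ∈ I, ∀ y ∈ J, B x y = 0 := fun x hx y hy => hy.1 x hx
    intro i j
    refine Fin.addCases (fun i' => ?_) (fun i' => ?_) i <;>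
      refine Fin.addCases (fun j' => ?_) (fun j' => ?_) j
    · intro hij
      rw [Fin.append_left, Fin.append_left]
      exact horth1 i' j' fun h => hij (congrArg (Fin.castAdd r2) h)
    · intro _
      rw [Fin.append_left, Fin.append_right]
      intro x hx y hy
      exact cross x (hA1le i' hx) y (hA2le j' hy)
    · intro _
      rw [Fin.append_right, Fin.append_left]
      intro x hx y hy
      rw [hsym]
      exact cross y (hA1le j' hy) x (hA2le i' hx)
    · intro hij
      rw [Fin.append_right, Fin.append_right]
      exact horth2 i' j' fun h => hij (congrArg (Fin.natAdd r1) h)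

end Aux

theorem quadratic_novikov_decomposition
    {k A : Type*} [Field k] [CharZero k] [AddCommGroup A] [Module k A]
    [FiniteDimensional k A]
    (mul : A →ₗ[k] A →ₗ[k] A) (B : LinearMap.BilinForm k A)
    (hnov1 : ∀ a b c, mul (mul a b) c - mul a (mul b c) = mul (mul b a) c - mul b (mul a c))
    (hnov2 : ∀ a b c, mul (mul a b) c = mul (mul a c) b)
    (hsym : ∀ a b, B a b = B b a)
    (hnd : ∀ a, (∀ b, B a b = 0) → a = 0)
    (hinv : ∀ a b c, B (mul a b) c = -(B b (mul a c + mul c a))) :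
    ∃ (r : ℕ), 0 < r ∧ ∃ Ai : Fin r → Submodule k A,
      DirectSum.IsInternal Ai ∧
      (∀ i, ∀ a ∈ Ai i, ∀ x : A, mul a x ∈ Ai i ∧ mul x a ∈ Ai i) ∧
      (∀ i, ∀ x ∈ Ai i, (∀ y ∈ Ai i, B x y = 0) → x = 0) ∧
      (∀ i, ∀ I : Submodule k A,
        (∀ a ∈ I, ∀ x : A, mul a x ∈ I ∧ mul x a ∈ I) →
        (∀ x ∈ I, (∀ y ∈ I, B x y = 0) → x = 0) →
        I ≤ Ai i → I = ⊥ ∨ I = Ai i) ∧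
      (∀ i j, i ≠ j → ∀ x ∈ Ai i, ∀ y ∈ Ai j, B x y = 0) := by
  obtain ⟨r, Ai, hsup, hidl, hndeg, hmin, horth⟩ :=
    decomp_aux mul B hsym hinv (Module.finrank k A + 1) ⊤
      (by rw [finrank_top]; omega)
      (fun a _ x => ⟨Submodule.mem_top, Submodule.mem_top⟩)
      (fun x _ h => hnd x fun b => h b Submodule.mem_top)
  rcases Nat.eq_zero_or_pos r with hr | hr
  · -- then A is trivial
    subst hr
    have htop : (⊤ : Submodule k A) = ⊥ := by
      rw [← hsup]; exact iSup_of_empty _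
    refine ⟨1, Nat.one_pos, fun _ => ⊤, ?_, ?_, ?_, ?_, ?_⟩
    · rw [DirectSum.isInternal_submodule_iff_iSupIndep_and_iSup_eq_top]
      constructor
      · intro i
        have : (⨆ j, ⨆ _ : j ≠ i, (⊤ : Submodule k A)) = ⊥ := by
          simp [Subsingleton.elim _ i]
        rw [this]
        exact disjoint_bot_right
      · simp
    · intro i a _ x; exact ⟨Submodule.mem_top, Submodule.mem_top⟩
    · intro i x _ h; exact hnd x fun b => h b Submodule.mem_top
    · intro i I _ _ hle
      left
      rw [eq_bot_iff, ← htop]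
      exact le_top
    · intro i j hij; exact absurd (Subsingleton.elim i j) hij
  · refine ⟨r, hr, Ai, ?_, hidl, hndeg, hmin, horth⟩
    rw [DirectSum.isInternal_submodule_iff_iSupIndep_and_iSup_eq_top]
    exact ⟨indep_of_ortho B hsym Ai hndeg horth, hsup⟩
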